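/- Let R = ℂ[[x,y]]/(xy) and let ω₁ = f₁ ξ, ω₂ = f₂ ξ be two local sections of the dualizing module (ξ a local generator, f₁, f₂ ∈ R). If f₁ f₂ = 0 in R (so the quadric ω₁⊗ω₂ + ω₂⊗ω₁ vanishes on the curve), and f₁ = a(x), f₂ = b(y) with a(0) = b(0) = 0, then the image df₁·df₂·ξ^{⊗2} of the quadric under the local 2nd Gaussian map lies in the torsion submodule of Sym²(Ω¹_R)⊗(dualizing)^{⊗2}, and its component in T_p ≅ ℂ·dxdy ⊕ ℂ·x dxdy ⊕ ℂ·y dxdy has coordinates (a'(0)b'(0), a''(0)b'(0), a'(0)b''(0)) up to the factor from ξ^{⊗2} and constants. -/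

import Mathlib

set_option synthInstance.maxHeartbeats 2000000
set_option maxHeartbeats 2000000

noncomputable section
open scoped TensorProduct

/-- `ℂ[[x,y]]`. -/
abbrev PS : Type := MvPowerSeries (Fin 2) ℂ

/-- The local ring of a node: `R = ℂ[[x,y]]/(xy)`. -/
abbrev NodeRing : Type :=
  PS ⧸ Ideal.span {(MvPowerSeries.X 0 : PS) * MvPowerSeries.X 1}

/-- The module of Kähler differentials `Ω¹_R` of `R` over `ℂ`. -/
abbrev OmegaR : Type := Ω[NodeRing⁄ℂ]

/-- The symmetrizing relations in `Ω¹ ⊗_R Ω¹`. -/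
def symRel : Submodule NodeRing (OmegaR ⊗[NodeRing] OmegaR) :=
  Submodule.span NodeRing {z | ∃ a b : OmegaR, z = a ⊗ₜ b - b ⊗ₜ a}

/-- The second symmetric power `Sym²(Ω¹_R)`. -/
abbrev Sym2Omega : Type := (OmegaR ⊗[NodeRing] OmegaR) ⧸ symRel

/-- The symmetric product of two differentials. -/
def sp (a b : OmegaR) : Sym2Omega := Submodule.Quotient.mk (a ⊗ₜ b)

/-- The class of `x` in `R`. -/
def xx : NodeRing := Ideal.Quotient.mk _ (MvPowerSeries.X 0)

/-- The class of `y` in `R`. -/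
def yy : NodeRing := Ideal.Quotient.mk _ (MvPowerSeries.X 1)

/-- The universal derivation `d : R → Ω¹_R`. -/
def dd : Derivation ℂ NodeRing OmegaR := KaehlerDifferential.D ℂ NodeRing

/-- `dx·dy ∈ Sym²(Ω¹_R)`. -/
def e1 : Sym2Omega := sp (dd xx) (dd yy)

/-- `x·dx·dy ∈ Sym²(Ω¹_R)`. -/
def e2 : Sym2Omega := xx • e1

/-- `y·dx·dy ∈ Sym²(Ω¹_R)`. -/
def e3 : Sym2Omega := yy • e1

/-- The element `a(x) ∈ R` obtained from a one-variable power series `a ∈ ℂ[[x]]`. -/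
def phiX (F : PowerSeries ℂ) : NodeRing :=
  Ideal.Quotient.mk _
    (show PS from fun d => if d 1 = 0 then PowerSeries.coeff (d 0) F else 0)

/-- The element `b(y) ∈ R` obtained from a one-variable power series `b ∈ ℂ[[y]]`. -/
def phiY (F : PowerSeries ℂ) : NodeRing :=
  Ideal.Quotient.mk _
    (show PS from fun d => if d 0 = 0 then PowerSeries.coeff (d 1) F else 0)

/-- The value at `0` of the formal derivative of `a ∈ ℂ[[X]]`, i.e. `a'(0)`. -/
def d1 (a : PowerSeries ℂ) : ℂ :=
  PowerSeries.constantCoeff (PowerSeries.derivative ℂ a)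

/-- The value at `0` of the second formal derivative of `a ∈ ℂ[[X]]`, i.e. `a''(0)`. -/
def d2 (a : PowerSeries ℂ) : ℂ :=
  PowerSeries.constantCoeff (PowerSeries.derivative ℂ (PowerSeries.derivative ℂ a))

attribute [-instance] instSMulKaehlerDifferentialOfSMulCommClass

instance natTower : @IsScalarTower ℕ NodeRing OmegaR (Algebra.toSMul) _ _ :=
  ⟨fun n r m => by exact (AddCommMonoid.nat_isScalarTower (R := NodeRing) (M := OmegaR)).smul_assoc n r m⟩

instance natTowerSym : @IsScalarTower ℕ NodeRing Sym2Omega (Algebra.toSMul) _ _ :=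
  ⟨fun n r m => by exact (AddCommMonoid.nat_isScalarTower (R := NodeRing) (M := Sym2Omega)).smul_assoc n r m⟩

namespace GaussAux

open PowerSeries

/-- raw lift of a power series to `ℂ[[x,y]]` via `x`. -/
def psiX (F : PowerSeries ℂ) : PS :=
  (show PS from fun d => if d 1 = 0 then PowerSeries.coeff (d 0) F else 0)

/-- raw lift of a power series to `ℂ[[x,y]]` via `y`. -/
def psiY (F : PowerSeries ℂ) : PS :=
  (show PS from fun d => if d 0 = 0 then PowerSeries.coeff (d 1) F else 0)

lemma phiX_eq (F : PowerSeries ℂ) : phiX F = Ideal.Quotient.mk _ (psiX F) := rfl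
lemma phiY_eq (F : PowerSeries ℂ) : phiY F = Ideal.Quotient.mk _ (psiY F) := rfl

lemma coeff_psiX (F : PowerSeries ℂ) (d : Fin 2 →₀ ℕ) :
    MvPowerSeries.coeff d (psiX F) = if d 1 = 0 then PowerSeries.coeff (d 0) F else 0 := rfl

lemma coeff_psiY (F : PowerSeries ℂ) (d : Fin 2 →₀ ℕ) :
    MvPowerSeries.coeff d (psiY F) = if d 0 = 0 then PowerSeries.coeff (d 1) F else 0 := rfl

lemma fin2_le {d e : Fin 2 →₀ ℕ} : d ≤ e ↔ d 0 ≤ e 0 ∧ d 1 ≤ e 1 := by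
  rw [Finsupp.le_def, Fin.forall_fin_two]

lemma fin2_eq_zero {d : Fin 2 →₀ ℕ} : d = 0 ↔ d 0 = 0 ∧ d 1 = 0 := by
  rw [Finsupp.ext_iff, Fin.forall_fin_two]; rfl

lemma psiX_add (F G : PowerSeries ℂ) : psiX (F + G) = psiX F + psiX G := by
  apply MvPowerSeries.ext; intro d
  rw [map_add, coeff_psiX, coeff_psiX, coeff_psiX, map_add]
  split <;> simp

lemma psiY_add (F G : PowerSeries ℂ) : psiY (F + G) = psiY F + psiY G := by
  apply MvPowerSeries.ext; intro d
  rw [map_add, coeff_psiY, coeff_psiY, coeff_psiY, map_add]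
  split <;> simp

lemma psiX_C_mul (c : ℂ) (F : PowerSeries ℂ) :
    psiX (PowerSeries.C c * F) = MvPowerSeries.C c * psiX F := by
  apply MvPowerSeries.ext; intro d
  rw [coeff_psiX, show (MvPowerSeries.C c : PS) = MvPowerSeries.monomial 0 c from rfl,
    MvPowerSeries.coeff_monomial_mul, if_pos zero_le, coeff_psiX]
  simp only [PowerSeries.coeff_C_mul, tsub_zero]
  split <;> simp

lemma psiY_C_mul (c : ℂ) (F : PowerSeries ℂ) :
    psiY (PowerSeries.C c * F) = MvPowerSeries.C c * psiY F := by
  apply MvPowerSeries.ext; intro d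
  rw [coeff_psiY, show (MvPowerSeries.C c : PS) = MvPowerSeries.monomial 0 c from rfl,
    MvPowerSeries.coeff_monomial_mul, if_pos zero_le, coeff_psiY]
  simp only [PowerSeries.coeff_C_mul, tsub_zero]
  split <;> simp

lemma psiX_one : psiX 1 = 1 := by
  apply MvPowerSeries.ext; intro d
  rw [coeff_psiX, MvPowerSeries.coeff_one, PowerSeries.coeff_one]
  by_cases h1 : d 1 = 0 <;> by_cases h0 : d 0 = 0 <;>
    simp [h0, h1, fin2_eq_zero]

lemma psiY_one : psiY 1 = 1 := by
  apply MvPowerSeries.ext; intro d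
  rw [coeff_psiY, MvPowerSeries.coeff_one, PowerSeries.coeff_one]
  by_cases h1 : d 1 = 0 <;> by_cases h0 : d 0 = 0 <;>
    simp [h0, h1, fin2_eq_zero]

lemma psiX_X_pow_mul (k : ℕ) (F : PowerSeries ℂ) :
    psiX (PowerSeries.X ^ k * F) = (MvPowerSeries.X 0 : PS) ^ k * psiX F := by
  apply MvPowerSeries.ext; intro d
  rw [coeff_psiX, MvPowerSeries.X_pow_eq, MvPowerSeries.coeff_monomial_mul,
    PowerSeries.coeff_X_pow_mul']
  have hle : Finsupp.single (0 : Fin 2) k ≤ d ↔ k ≤ d 0 := by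
    rw [fin2_le]
    simp [Finsupp.single_apply]
  have h1 : (d - Finsupp.single (0 : Fin 2) k) 1 = d 1 := by
    rw [Finsupp.tsub_apply]; simp [Finsupp.single_apply]
  have h0 : (d - Finsupp.single (0 : Fin 2) k) 0 = d 0 - k := by
    rw [Finsupp.tsub_apply]; simp
  by_cases hk : k ≤ d 0
  · rw [if_pos (hle.mpr hk), one_mul, coeff_psiX, h1, h0, if_pos hk]
  · rw [if_neg (fun h => hk (hle.mp h))]
    split <;> simp [hk]

lemma psiY_X_pow_mul (k : ℕ) (F : PowerSeries ℂ) :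
    psiY (PowerSeries.X ^ k * F) = (MvPowerSeries.X 1 : PS) ^ k * psiY F := by
  apply MvPowerSeries.ext; intro d
  rw [coeff_psiY, MvPowerSeries.X_pow_eq, MvPowerSeries.coeff_monomial_mul,
    PowerSeries.coeff_X_pow_mul']
  have hle : Finsupp.single (1 : Fin 2) k ≤ d ↔ k ≤ d 1 := by
    rw [fin2_le]
    simp [Finsupp.single_apply]
  have h0 : (d - Finsupp.single (1 : Fin 2) k) 0 = d 0 := by
    rw [Finsupp.tsub_apply]; simp [Finsupp.single_apply]
  have h1 : (d - Finsupp.single (1 : Fin 2) k) 1 = d 1 - k := by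
    rw [Finsupp.tsub_apply]; simp
  by_cases hk : k ≤ d 1
  · rw [if_pos (hle.mpr hk), one_mul, coeff_psiY, h0, h1, if_pos hk]
  · rw [if_neg (fun h => hk (hle.mp h))]
    split <;> simp [hk]

end GaussAux

namespace GaussAux

open PowerSeries

/-- the tail of `a` after degree 2. -/
def sh3 (a : PowerSeries ℂ) : PowerSeries ℂ := PowerSeries.mk fun n => PowerSeries.coeff (n + 3) a

lemma ps_decomp (a : PowerSeries ℂ) :
    a = PowerSeries.C (PowerSeries.coeff 0 a) * 1
      + PowerSeries.C (PowerSeries.coeff 1 a) * (PowerSeries.X ^ 1 * 1)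
      + PowerSeries.C (PowerSeries.coeff 2 a) * (PowerSeries.X ^ 2 * 1)
      + PowerSeries.X ^ 3 * sh3 a := by
  apply PowerSeries.ext; intro n
  simp only [map_add, PowerSeries.coeff_C_mul, mul_one, PowerSeries.coeff_X_pow_mul',
    PowerSeries.coeff_X_pow, sh3, PowerSeries.coeff_mk, PowerSeries.coeff_one]
  rcases n with _ | (_ | (_ | n))
  · norm_num
  · norm_num
  · norm_num
  · norm_num
    exact fun h => absurd h (by omega)

lemma mk_C (c : ℂ) :
    Ideal.Quotient.mk (Ideal.span {(MvPowerSeries.X 0 : PS) * MvPowerSeries.X 1})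
      (MvPowerSeries.C c) = algebraMap ℂ NodeRing c := rfl

lemma phiX_decomp (a : PowerSeries ℂ) :
    phiX a = algebraMap ℂ NodeRing (PowerSeries.coeff 0 a)
      + algebraMap ℂ NodeRing (PowerSeries.coeff 1 a) * xx
      + algebraMap ℂ NodeRing (PowerSeries.coeff 2 a) * xx ^ 2
      + xx ^ 3 * phiX (sh3 a) := by
  conv_lhs => rw [phiX_eq, ps_decomp a]
  rw [psiX_add, psiX_add, psiX_add, psiX_C_mul, psiX_one, psiX_C_mul, psiX_X_pow_mul, psiX_one,
    psiX_C_mul, psiX_X_pow_mul, psiX_one, psiX_X_pow_mul]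
  simp only [map_add, map_mul, map_pow, mul_one, mk_C, pow_one]
  rfl

lemma phiY_decomp (b : PowerSeries ℂ) :
    phiY b = algebraMap ℂ NodeRing (PowerSeries.coeff 0 b)
      + algebraMap ℂ NodeRing (PowerSeries.coeff 1 b) * yy
      + algebraMap ℂ NodeRing (PowerSeries.coeff 2 b) * yy ^ 2
      + yy ^ 3 * phiY (sh3 b) := by
  conv_lhs => rw [phiY_eq, ps_decomp b]
  rw [psiY_add, psiY_add, psiY_add, psiY_C_mul, psiY_one, psiY_C_mul, psiY_X_pow_mul, psiY_one,
    psiY_C_mul, psiY_X_pow_mul, psiY_one, psiY_X_pow_mul]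
  simp only [map_add, map_mul, map_pow, mul_one, mk_C, pow_one]
  rfl

lemma hxy : xx * yy = 0 := by
  rw [xx, yy, ← map_mul, Ideal.Quotient.eq_zero_iff_mem]
  exact Ideal.subset_span rfl

lemma leib : xx • dd yy + yy • dd xx = 0 := by
  rw [← Derivation.leibniz, hxy, map_zero]

lemma K3 : (xx ^ 2) • dd yy = 0 := by
  have h : xx • dd yy = -(yy • dd xx) := eq_neg_of_add_eq_zero_left leib
  rw [pow_two, mul_smul, h, smul_neg (M := NodeRing) (A := OmegaR), smul_smul]
  rw [neg_eq_zero, hxy]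
  exact zero_smul NodeRing (dd xx)

lemma K4 : (yy ^ 2) • dd xx = 0 := by
  have h : yy • dd xx = -(xx • dd yy) := eq_neg_of_add_eq_zero_right leib
  rw [pow_two, mul_smul, h, smul_neg (M := NodeRing) (A := OmegaR), smul_smul, show yy * xx = (0 : NodeRing) from by rw [mul_comm]; exact hxy]
  rw [neg_eq_zero]
  exact zero_smul NodeRing (dd yy)

lemma dd_phiX (a : PowerSeries ℂ) :
    dd (phiX a) = (algebraMap ℂ NodeRing (PowerSeries.coeff 1 a)
        + 2 * algebraMap ℂ NodeRing (PowerSeries.coeff 2 a) * xx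
        + 3 * xx ^ 2 * phiX (sh3 a)) • dd xx
      + (xx ^ 3) • dd (phiX (sh3 a)) := by
  conv_lhs => rw [phiX_decomp a]
  rw [map_add, map_add, map_add, Derivation.map_algebraMap, Derivation.leibniz,
    Derivation.map_algebraMap, Derivation.leibniz, Derivation.map_algebraMap,
    Derivation.leibniz, Derivation.leibniz_pow, Derivation.leibniz_pow]
  module

lemma dd_phiY (b : PowerSeries ℂ) :
    dd (phiY b) = (algebraMap ℂ NodeRing (PowerSeries.coeff 1 b)
        + 2 * algebraMap ℂ NodeRing (PowerSeries.coeff 2 b) * yy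
        + 3 * yy ^ 2 * phiY (sh3 b)) • dd yy
      + (yy ^ 3) • dd (phiY (sh3 b)) := by
  conv_lhs => rw [phiY_decomp b]
  rw [map_add, map_add, map_add, Derivation.map_algebraMap, Derivation.leibniz,
    Derivation.map_algebraMap, Derivation.leibniz, Derivation.map_algebraMap,
    Derivation.leibniz, Derivation.leibniz_pow, Derivation.leibniz_pow]
  module

end GaussAux

namespace GaussAux

open PowerSeries TensorProduct

lemma he1 : e1 = Submodule.Quotient.mk (p := symRel) ((dd xx) ⊗ₜ[NodeRing] (dd yy)) := rfl

lemma tensor_T_xx2 : (xx ^ 2) • ((dd xx) ⊗ₜ[NodeRing] (dd yy)) = 0 := by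
  rw [← TensorProduct.tmul_smul, K3, TensorProduct.tmul_zero]

lemma tensor_T_yy2 : (yy ^ 2) • ((dd xx) ⊗ₜ[NodeRing] (dd yy)) = 0 := by
  rw [TensorProduct.smul_tmul', K4, TensorProduct.zero_tmul]

lemma kill1 : (xx ^ 2) • e1 = 0 := by
  rw [he1, ← Submodule.Quotient.mk_smul, tensor_T_xx2, Submodule.Quotient.mk_zero]

lemma kill2 : (yy ^ 2) • e1 = 0 := by
  rw [he1, ← Submodule.Quotient.mk_smul, tensor_T_yy2, Submodule.Quotient.mk_zero]

lemma kill (p q w : NodeRing) : (p * xx ^ 2 + q * yy ^ 2 + w * (xx * yy)) • e1 = 0 := by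
  rw [hxy, mul_zero, add_zero, add_smul, mul_smul, mul_smul, kill1, kill2, smul_zero, smul_zero,
    add_zero]

lemma tensor_main (a b : PowerSeries ℂ) :
    (dd (phiX a)) ⊗ₜ[NodeRing] (dd (phiY b)) =
      (algebraMap ℂ NodeRing (PowerSeries.coeff 1 a)
          * algebraMap ℂ NodeRing (PowerSeries.coeff 1 b)) • ((dd xx) ⊗ₜ[NodeRing] (dd yy))
      + ((2 * algebraMap ℂ NodeRing (PowerSeries.coeff 2 a)
          * algebraMap ℂ NodeRing (PowerSeries.coeff 1 b)) * xx) • ((dd xx) ⊗ₜ[NodeRing] (dd yy))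
      + ((2 * algebraMap ℂ NodeRing (PowerSeries.coeff 1 a)
          * algebraMap ℂ NodeRing (PowerSeries.coeff 2 b)) * yy)
            • ((dd xx) ⊗ₜ[NodeRing] (dd yy)) := by
  set A1 := algebraMap ℂ NodeRing (PowerSeries.coeff 1 a) with hA1
  set A2 := algebraMap ℂ NodeRing (PowerSeries.coeff 2 a) with hA2
  set B1 := algebraMap ℂ NodeRing (PowerSeries.coeff 1 b) with hB1
  set B2 := algebraMap ℂ NodeRing (PowerSeries.coeff 2 b) with hB2
  set ρ := phiX (sh3 a) with hρ
  set σ := phiY (sh3 b) with hσ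
  set u := A1 + 2 * A2 * xx + 3 * xx ^ 2 * ρ with hu
  set v := B1 + 2 * B2 * yy + 3 * yy ^ 2 * σ with hv
  have hD1 : dd (phiX a) = u • dd xx + (xx ^ 3) • dd (phiX (sh3 a)) := dd_phiX a
  have hD2 : dd (phiY b) = v • dd yy + (yy ^ 3) • dd (phiY (sh3 b)) := dd_phiY b
  rw [hD1, hD2, TensorProduct.add_tmul, TensorProduct.tmul_add, TensorProduct.tmul_add]
  have h2 : (u • dd xx) ⊗ₜ[NodeRing] ((yy ^ 3) • dd (phiY (sh3 b))) = 0 := by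
    rw [TensorProduct.tmul_smul, TensorProduct.smul_tmul', smul_smul,
      show yy ^ 3 * u = (yy * u) * yy ^ 2 from by ring, mul_smul, K4, smul_zero,
      TensorProduct.zero_tmul]
  have h3 : ((xx ^ 3) • dd (phiX (sh3 a))) ⊗ₜ[NodeRing] (v • dd yy) = 0 := by
    rw [TensorProduct.smul_tmul, smul_smul,
      show xx ^ 3 * v = (xx * v) * xx ^ 2 from by ring, mul_smul, K3, smul_zero,
      TensorProduct.tmul_zero]
  have h4 : ((xx ^ 3) • dd (phiX (sh3 a))) ⊗ₜ[NodeRing] ((yy ^ 3) • dd (phiY (sh3 b))) = 0 := by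
    rw [TensorProduct.smul_tmul, smul_smul,
      show xx ^ 3 * yy ^ 3 = (xx ^ 2 * yy ^ 2) * (xx * yy) from by ring, hxy, mul_zero,
      zero_smul NodeRing (dd (phiY (sh3 b))), TensorProduct.tmul_zero]
  rw [h2, h3, h4, add_zero, add_zero, add_zero]
  rw [TensorProduct.smul_tmul_smul]
  have hs : u * v = A1 * B1 + (2 * A2 * B1) * xx + (2 * A1 * B2) * yy
      + ((3 * ρ * B1) * xx ^ 2 + (3 * σ * A1) * yy ^ 2
        + (4 * A2 * B2 + 6 * A2 * yy * σ + 6 * B2 * xx * ρ + 9 * xx * yy * ρ * σ) * (xx * yy)) := by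
    rw [hu, hv]; ring
  rw [hs]
  rw [add_smul, add_smul, add_smul, add_smul, add_smul, mul_smul (3 * ρ * B1), mul_smul (3 * σ * A1),
    tensor_T_xx2, tensor_T_yy2, smul_zero, smul_zero, hxy, mul_zero,
    zero_smul NodeRing ((dd xx) ⊗ₜ[NodeRing] (dd yy))]
  abel

lemma main_eq (a b : PowerSeries ℂ) :
    sp (dd (phiX a)) (dd (phiY b)) =
      (algebraMap ℂ NodeRing (PowerSeries.coeff 1 a)
          * algebraMap ℂ NodeRing (PowerSeries.coeff 1 b)) • e1
      + ((2 * algebraMap ℂ NodeRing (PowerSeries.coeff 2 a)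
          * algebraMap ℂ NodeRing (PowerSeries.coeff 1 b)) * xx) • e1
      + ((2 * algebraMap ℂ NodeRing (PowerSeries.coeff 1 a)
          * algebraMap ℂ NodeRing (PowerSeries.coeff 2 b)) * yy) • e1 := by
  show Submodule.Quotient.mk (p := symRel) ((dd (phiX a)) ⊗ₜ[NodeRing] (dd (phiY b))) = _
  rw [tensor_main a b, Submodule.Quotient.mk_add, Submodule.Quotient.mk_add,
    Submodule.Quotient.mk_smul, Submodule.Quotient.mk_smul, Submodule.Quotient.mk_smul]
  rfl

lemma d1_eq (a : PowerSeries ℂ) : d1 a = PowerSeries.coeff 1 a := by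
  rw [d1, ← PowerSeries.coeff_zero_eq_constantCoeff, PowerSeries.coeff_derivative]
  norm_num

lemma d2_eq (a : PowerSeries ℂ) : d2 a = 2 * PowerSeries.coeff 2 a := by
  rw [d2, ← PowerSeries.coeff_zero_eq_constantCoeff, PowerSeries.coeff_derivative,
    PowerSeries.coeff_derivative]
  norm_num; ring

lemma csmul (c : ℂ) (m : Sym2Omega) : c • m = (algebraMap ℂ NodeRing c) • m :=
  (algebraMap_smul NodeRing c m).symm

end GaussAux

namespace GaussAux

open PowerSeries

lemma nzd1 : (xx + yy) ∈ nonZeroDivisors NodeRing := by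
  rw [mem_nonZeroDivisors_iff_right]
  intro g hg
  obtain ⟨F, rfl⟩ := Ideal.Quotient.mk_surjective g
  set I : Ideal PS := Ideal.span {(MvPowerSeries.X 0 : PS) * MvPowerSeries.X 1} with hI
  set s0 : Fin 2 →₀ ℕ := Finsupp.single 0 1 with hs0
  set s1 : Fin 2 →₀ ℕ := Finsupp.single 1 1 with hs1
  have hX0 : (MvPowerSeries.X 0 : PS) = MvPowerSeries.monomial s0 1 := rfl
  have hX1 : (MvPowerSeries.X 1 : PS) = MvPowerSeries.monomial s1 1 := rfl
  have hmono : (MvPowerSeries.X 0 : PS) * MvPowerSeries.X 1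
      = MvPowerSeries.monomial (s0 + s1) 1 := by
    rw [hX0, hX1, MvPowerSeries.monomial_mul_monomial, mul_one]
  have hdvd : ((MvPowerSeries.X 0 : PS) * MvPowerSeries.X 1) ∣
      F * (MvPowerSeries.X 0 + MvPowerSeries.X 1) := by
    rw [← Ideal.mem_span_singleton]
    apply Ideal.Quotient.eq_zero_iff_mem.mp
    rw [map_mul, map_add]
    exact hg
  obtain ⟨G, hG⟩ := hdvd
  rw [hmono] at hG
  have h0 : ∀ d : Fin 2 →₀ ℕ, d 1 = 0 → MvPowerSeries.coeff d F = 0 := by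
    intro d hd
    have hc := congrArg (MvPowerSeries.coeff (d + s0)) hG
    rw [mul_add, map_add, hX0, hX1, MvPowerSeries.coeff_add_mul_monomial,
      MvPowerSeries.coeff_mul_monomial, MvPowerSeries.coeff_monomial_mul] at hc
    rw [if_neg, if_neg] at hc
    · simpa using hc
    · intro hle
      have := (fin2_le.mp hle).2
      simp [Finsupp.add_apply, hs0, hs1, Finsupp.single_apply, hd] at this
    · intro hle
      have := (fin2_le.mp hle).2
      simp [Finsupp.add_apply, hs0, hs1, Finsupp.single_apply, hd] at this
  have h1 : ∀ d : Fin 2 →₀ ℕ, d 0 = 0 → MvPowerSeries.coeff d F = 0 := by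
    intro d hd
    have hc := congrArg (MvPowerSeries.coeff (d + s1)) hG
    rw [mul_add, map_add, hX0, hX1, MvPowerSeries.coeff_add_mul_monomial,
      MvPowerSeries.coeff_mul_monomial, MvPowerSeries.coeff_monomial_mul] at hc
    rw [if_neg, if_neg] at hc
    · simpa using hc
    · intro hle
      have := (fin2_le.mp hle).1
      simp [Finsupp.add_apply, hs0, hs1, Finsupp.single_apply, hd] at this
    · intro hle
      have := (fin2_le.mp hle).1
      simp [Finsupp.add_apply, hs0, hs1, Finsupp.single_apply, hd] at this
  apply Ideal.Quotient.eq_zero_iff_mem.mpr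
  rw [Ideal.mem_span_singleton]
  refine ⟨(show PS from fun e => MvPowerSeries.coeff (e + (s0 + s1)) F), ?_⟩
  rw [hmono]
  apply MvPowerSeries.ext; intro d
  rw [MvPowerSeries.coeff_monomial_mul]
  by_cases hle : s0 + s1 ≤ d
  · rw [if_pos hle, one_mul]
    show MvPowerSeries.coeff d F = MvPowerSeries.coeff ((d - (s0 + s1)) + (s0 + s1)) F
    rw [tsub_add_cancel_of_le hle]
  · rw [if_neg hle]
    have hor : d 0 = 0 ∨ d 1 = 0 := by
      by_contra hcon
      push_neg at hcon
      apply hle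
      rw [fin2_le]
      constructor <;> simp [Finsupp.add_apply, hs0, hs1, Finsupp.single_apply] <;> omega
    rcases hor with h | h
    · exact h1 d h
    · exact h0 d h

lemma nzd : (xx + yy) * (xx + yy) ∈ nonZeroDivisors NodeRing := mul_mem nzd1 nzd1

end GaussAux

open GaussAux in
theorem gaussian_torsion_coordinates' (a b : PowerSeries ℂ) :
    sp (dd (phiX a)) (dd (phiY b)) ∈ Submodule.torsion NodeRing Sym2Omega ∧
      sp (dd (phiX a)) (dd (phiY b)) =
        (d1 a * d1 b) • e1 + (d2 a * d1 b) • e2 + (d1 a * d2 b) • e3 := by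
  have hmain := main_eq a b
  constructor
  · refine (Submodule.mem_torsion_iff _).mpr ⟨⟨(xx + yy) * (xx + yy), nzd⟩, ?_⟩
    show ((xx + yy) * (xx + yy)) • sp (dd (phiX a)) (dd (phiY b)) = 0
    rw [hmain]
    have hcol : ((xx + yy) * (xx + yy)) • ((algebraMap ℂ NodeRing (PowerSeries.coeff 1 a)
          * algebraMap ℂ NodeRing (PowerSeries.coeff 1 b)) • e1
        + ((2 * algebraMap ℂ NodeRing (PowerSeries.coeff 2 a)
          * algebraMap ℂ NodeRing (PowerSeries.coeff 1 b)) * xx) • e1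
        + ((2 * algebraMap ℂ NodeRing (PowerSeries.coeff 1 a)
          * algebraMap ℂ NodeRing (PowerSeries.coeff 2 b)) * yy) • e1)
        = ((xx + yy) * (xx + yy) * (algebraMap ℂ NodeRing (PowerSeries.coeff 1 a)
          * algebraMap ℂ NodeRing (PowerSeries.coeff 1 b))
        + (xx + yy) * (xx + yy) * ((2 * algebraMap ℂ NodeRing (PowerSeries.coeff 2 a)
          * algebraMap ℂ NodeRing (PowerSeries.coeff 1 b)) * xx)
        + (xx + yy) * (xx + yy) * ((2 * algebraMap ℂ NodeRing (PowerSeries.coeff 1 a)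
          * algebraMap ℂ NodeRing (PowerSeries.coeff 2 b)) * yy)) • e1 := by
      module
    rw [hcol]
    rw [show (xx + yy) * (xx + yy) * (algebraMap ℂ NodeRing (PowerSeries.coeff 1 a)
        * algebraMap ℂ NodeRing (PowerSeries.coeff 1 b))
      + (xx + yy) * (xx + yy) * ((2 * algebraMap ℂ NodeRing (PowerSeries.coeff 2 a)
        * algebraMap ℂ NodeRing (PowerSeries.coeff 1 b)) * xx)
      + (xx + yy) * (xx + yy) * ((2 * algebraMap ℂ NodeRing (PowerSeries.coeff 1 a)
        * algebraMap ℂ NodeRing (PowerSeries.coeff 2 b)) * yy)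
      = (algebraMap ℂ NodeRing (PowerSeries.coeff 1 a)
          * algebraMap ℂ NodeRing (PowerSeries.coeff 1 b)
          + (2 * algebraMap ℂ NodeRing (PowerSeries.coeff 2 a)
          * algebraMap ℂ NodeRing (PowerSeries.coeff 1 b)) * xx
          + (2 * algebraMap ℂ NodeRing (PowerSeries.coeff 1 a)
          * algebraMap ℂ NodeRing (PowerSeries.coeff 2 b)) * yy) * xx ^ 2
        + (algebraMap ℂ NodeRing (PowerSeries.coeff 1 a)
          * algebraMap ℂ NodeRing (PowerSeries.coeff 1 b)
          + (2 * algebraMap ℂ NodeRing (PowerSeries.coeff 2 a)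
          * algebraMap ℂ NodeRing (PowerSeries.coeff 1 b)) * xx
          + (2 * algebraMap ℂ NodeRing (PowerSeries.coeff 1 a)
          * algebraMap ℂ NodeRing (PowerSeries.coeff 2 b)) * yy) * yy ^ 2
        + (2 * (algebraMap ℂ NodeRing (PowerSeries.coeff 1 a)
          * algebraMap ℂ NodeRing (PowerSeries.coeff 1 b)
          + (2 * algebraMap ℂ NodeRing (PowerSeries.coeff 2 a)
          * algebraMap ℂ NodeRing (PowerSeries.coeff 1 b)) * xx
          + (2 * algebraMap ℂ NodeRing (PowerSeries.coeff 1 a)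
          * algebraMap ℂ NodeRing (PowerSeries.coeff 2 b)) * yy)) * (xx * yy) from by ring]
    exact kill _ _ _
  · rw [hmain, csmul (d1 a * d1 b), csmul (d2 a * d1 b), csmul (d1 a * d2 b)]
    rw [show e2 = xx • e1 from rfl, show e3 = yy • e1 from rfl]
    rw [d1_eq, d1_eq, d2_eq, d2_eq, map_mul, map_mul, map_mul, map_mul]
    match_scalars
    all_goals (simp only [map_ofNat]; ring)


/-- in `R = ℂ[[x,y]]/(xy)`, let `f₁ = a(x)` and `f₂ = b(y)` with
`a(0) = b(0) = 0` (so `f₁ f₂ = 0`). Then the symmetric product `df₁·df₂` lies in the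
torsion submodule of `Sym²(Ω¹_R)`, and on the basis `dx·dy, x·dx·dy, y·dx·dy` of the
torsion it has coordinates `(a'(0)b'(0), a''(0)b'(0), a'(0)b''(0))`. -/
theorem gaussian_torsion_coordinates (a b : PowerSeries ℂ)
    (ha : PowerSeries.constantCoeff a = 0) (hb : PowerSeries.constantCoeff b = 0)
    (hprod : phiX a * phiY b = 0) :
    sp (dd (phiX a)) (dd (phiY b)) ∈ Submodule.torsion NodeRing Sym2Omega ∧
      sp (dd (phiX a)) (dd (phiY b)) =
        (d1 a * d1 b) • e1 + (d2 a * d1 b) • e2 + (d1 a * d2 b) • e3 := by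
  exact gaussian_torsion_coordinates' a b
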